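/- Let H be a separable complex Hilbert space, let T ∈ B(H) be an operator that is not semi-Fredholm and let 0 < ε < ‖T‖. Let T = PA be the polar decomposition of T (P a partial isometry, A positive, ker(P) = (range A)^⊥) and let ν be the spectral measure of A. Then the operator S = P ∫_{[ε,‖T‖]} t dν(t) satisfies: (i) ‖Sx‖ ≥ ε‖x‖ for all x ∈ ker(S)^⊥, so in particular S has closed range; (ii) dim(ker S) = dim((range S)^⊥) = ∞; (iii) ‖T − S‖ ≤ ε. -/

import Mathlib

noncomputable section

/-- An operator is semi-Fredholm if it has closed range and its kernel or the kernel
of its adjoint is finite dimensional. -/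
def IsSemiFredholm {E : Type*} [NormedAddCommGroup E] [InnerProductSpace ℂ E]
    [CompleteSpace E] (T : E →L[ℂ] E) : Prop :=
  IsClosed (Set.range T) ∧
    (FiniteDimensional ℂ (LinearMap.ker (T : E →ₗ[ℂ] E)) ∨
      FiniteDimensional ℂ (LinearMap.ker ((ContinuousLinearMap.adjoint T : E →L[ℂ] E) : E →ₗ[ℂ] E)))

/-- `P` is a partial isometry: it is isometric on the orthogonal complement of its
kernel. -/
def IsPartialIsom {E : Type*} [NormedAddCommGroup E] [InnerProductSpace ℂ E]
    (P : E →L[ℂ] E) : Prop :=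
  ∀ x ∈ (LinearMap.ker (P : E →ₗ[ℂ] E))ᗮ, ‖P x‖ = ‖x‖

/-- `Q` is the spectral projection `ν([ε, ∞))` of the positive operator `A`, where `ν`
is the projection-valued spectral measure of `A` (for `ε ≤ ‖A‖` this coincides with
`ν([ε, ‖A‖])` since the spectral measure is supported on `[0, ‖A‖]`): equivalently, `Q`
is the unique orthogonal projection commuting with `A` such that `A ≥ ε` on the range of
`Q` and `A < ε` strictly on the kernel of `Q`. -/
def IsSpectralProjAbove {E : Type*} [NormedAddCommGroup E] [InnerProductSpace ℂ E]
    [CompleteSpace E] (A : E →L[ℂ] E) (ε : ℝ) (Q : E →L[ℂ] E) : Prop :=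
  Q ∘L Q = Q ∧ ContinuousLinearMap.adjoint Q = Q ∧ A ∘L Q = Q ∘L A ∧
    (∀ x ∈ LinearMap.range (Q : E →ₗ[ℂ] E), ε * ‖x‖ ^ 2 ≤ (inner ℂ (A x) x : ℂ).re) ∧
    (∀ x ∈ LinearMap.ker (Q : E →ₗ[ℂ] E), x ≠ 0 → (inner ℂ (A x) x : ℂ).re < ε * ‖x‖ ^ 2)

section Aux
variable {E : Type*} [NormedAddCommGroup E] [InnerProductSpace ℂ E] [CompleteSpace E]

lemma pos_cs {A : E →L[ℂ] E} (hA : A.IsPositive) (x y : E) :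
    (inner ℂ (A x) y : ℂ).re ^ 2 ≤ (inner ℂ (A x) x : ℂ).re * (inner ℂ (A y) y : ℂ).re := by
  have hadj : ContinuousLinearMap.adjoint A = A := ContinuousLinearMap.isSelfAdjoint_iff'.mp hA.isSelfAdjoint
  have hsym : ∀ u v : E, (inner ℂ (A u) v : ℂ) = inner ℂ u (A v) := fun u v => by
    conv_lhs => rw [← hadj]
    exact ContinuousLinearMap.adjoint_inner_left A v u
  have key : ∀ t : ℝ, 0 ≤ (inner ℂ (A y) y : ℂ).re * (t * t) +
      (2 * (inner ℂ (A x) y : ℂ).re) * t + (inner ℂ (A x) x : ℂ).re := by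
    intro t
    have h0 : (0:ℝ) ≤ (inner ℂ (A (x + (t:ℂ) • y)) (x + (t:ℂ) • y) : ℂ).re := hA.re_inner_nonneg_left _
    have hexp : (inner ℂ (A (x + (t:ℂ) • y)) (x + (t:ℂ) • y) : ℂ) =
        inner ℂ (A x) x + (t:ℂ) * inner ℂ (A x) y + (t:ℂ) * inner ℂ (A y) x
          + (t:ℂ) * ((t:ℂ) * inner ℂ (A y) y) := by
      simp only [map_add, map_smul, inner_add_left, inner_add_right, inner_smul_left,
        inner_smul_right, Complex.conj_ofReal]
      ring
    have hyx : (inner ℂ (A y) x : ℂ) = (starRingEnd ℂ) (inner ℂ (A x) y) := by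
      rw [hsym y x, ← inner_conj_symm]
    rw [hexp, hyx] at h0
    simp only [Complex.add_re, Complex.mul_re, Complex.conj_re, Complex.conj_im,
      Complex.ofReal_re, Complex.ofReal_im] at h0
    nlinarith [h0]
  have hd := discrim_le_zero key
  rw [discrim] at hd
  nlinarith [hd]

lemma closed_image_of_bound (f : E →L[ℂ] E) (K : Submodule ℂ E) (hK : IsClosed (K : Set E))
    {c : ℝ} (hc : 0 < c) (hb : ∀ x ∈ K, c * ‖x‖ ≤ ‖f x‖) :
    IsClosed (f '' (K : Set E)) := by
  haveI : CompleteSpace K := hK.completeSpace_coe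
  set g : K →L[ℂ] E := f.comp K.subtypeL with hg
  have hanti : AntilipschitzWith (c⁻¹).toNNReal g := by
    apply g.antilipschitz_of_bound
    intro x
    rw [Real.coe_toNNReal _ (by positivity)]
    have hx : g x = f (x : E) := rfl
    have h1 : c * ‖(x : E)‖ ≤ ‖f (x : E)‖ := hb _ x.2
    have hxn : ‖x‖ = ‖(x : E)‖ := rfl
    rw [hxn, hx, le_inv_mul_iff₀ hc]
    exact h1
  have := hanti.isClosed_range g.uniformContinuous
  have hrange : Set.range g = f '' (K : Set E) := by
    ext z
    simp [hg, Set.mem_image, Set.range_comp]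
  rwa [hrange] at this

omit [CompleteSpace E] in
lemma closed_sup_fd (V F : Submodule ℂ E) (hV : IsClosed (V : Set E))
    [FiniteDimensional ℂ F] : IsClosed ((V ⊔ F : Submodule ℂ E) : Set E) := by
  haveI : IsClosed (V : Set E) := hV
  have hcont : Continuous V.mkQ := continuous_quot_mk
  have hGfd : FiniteDimensional ℂ (F.map V.mkQ) := Module.Finite.map F V.mkQ
  have hGclosed : IsClosed ((F.map V.mkQ : Submodule ℂ (E ⧸ V)) : Set (E ⧸ V)) :=
    Submodule.closed_of_finiteDimensional _
  have heq : ((V ⊔ F : Submodule ℂ E) : Set E) = V.mkQ ⁻¹' (F.map V.mkQ : Set (E ⧸ V)) := by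
    have : Submodule.comap V.mkQ (F.map V.mkQ) = V ⊔ F := by
      rw [Submodule.comap_map_eq, Submodule.ker_mkQ, sup_comm]
    rw [← this]; rfl
  rw [heq]
  exact hGclosed.preimage hcont

end Aux

set_option maxHeartbeats 1000000 in
/-- Let `H` be a separable complex Hilbert space, `T ∈ B(H)` not
semi-Fredholm, `0 < ε < ‖T‖`.  Let `T = P ∘ A` be the polar decomposition of `T` (`P` a
partial isometry, `A` positive, `ker P = (range A)ᗮ`) and let `ν` be the spectral measure
of `A`.  Then the operator `S = P ∘ ∫_{[ε,‖T‖]} t dν(t) = P ∘ (A ∘ Q)`, where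
`Q = ν([ε,‖T‖])` is the spectral projection of `A` for `[ε, ‖T‖]`, satisfies:
(i) `‖S x‖ ≥ ε ‖x‖` for all `x ∈ (ker S)ᗮ`, so in particular `S` has closed range;
(ii) `dim (ker S) = dim ((range S)ᗮ) = ∞`; (iii) `‖T - S‖ ≤ ε`. -/
theorem polar_truncation_properties
    (H : Type*) [NormedAddCommGroup H] [InnerProductSpace ℂ H] [CompleteSpace H]
    [TopologicalSpace.SeparableSpace H]
    (T P A Q : H →L[ℂ] H) (hT : ¬ IsSemiFredholm T)
    (ε : ℝ) (hε : 0 < ε) (hεT : ε < ‖T‖)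
    (hP : IsPartialIsom P) (hApos : ContinuousLinearMap.IsPositive A)
    (hkerP : LinearMap.ker (P : H →ₗ[ℂ] H) = (LinearMap.range (A : H →ₗ[ℂ] H))ᗮ)
    (hTPA : T = P ∘L A)
    (hQ : IsSpectralProjAbove A ε Q) :
    (∀ x ∈ (LinearMap.ker ((P ∘L (A ∘L Q) : H →L[ℂ] H) : H →ₗ[ℂ] H))ᗮ, ε * ‖x‖ ≤ ‖(P ∘L (A ∘L Q)) x‖) ∧
      IsClosed (Set.range ⇑(P ∘L (A ∘L Q))) ∧
      ¬ FiniteDimensional ℂ (LinearMap.ker ((P ∘L (A ∘L Q) : H →L[ℂ] H) : H →ₗ[ℂ] H)) ∧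
      ¬ FiniteDimensional ℂ ((LinearMap.range ((P ∘L (A ∘L Q) : H →L[ℂ] H) : H →ₗ[ℂ] H))ᗮ) ∧
      ‖T - P ∘L (A ∘L Q)‖ ≤ ε := by
  obtain ⟨hQidem, hQsa, hAQ, hge, hlt⟩ := hQ
  set S : H →L[ℂ] H := P ∘L (A ∘L Q) with hS
  -- Q is idempotent
  have hQQ : ∀ x, Q (Q x) = Q x := fun x => by
    conv_rhs => rw [← hQidem, ContinuousLinearMap.comp_apply]
  -- Q fixes its range
  have hQfix : ∀ x ∈ LinearMap.range (Q : H →ₗ[ℂ] H), Q x = x := by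
    rintro _ ⟨y, rfl⟩; exact hQQ y
  -- Q is symmetric
  have hQsym : ∀ u v : H, (inner ℂ (Q u) v : ℂ) = inner ℂ u (Q v) := fun u v => by
    conv_lhs => rw [← hQsa]
    exact ContinuousLinearMap.adjoint_inner_left Q v u
  -- A is symmetric
  have hAadj : ContinuousLinearMap.adjoint A = A :=
    ContinuousLinearMap.isSelfAdjoint_iff'.mp hApos.isSelfAdjoint
  have hAsym : ∀ u v : H, (inner ℂ (A u) v : ℂ) = inner ℂ u (A v) := fun u v => by
    conv_lhs => rw [← hAadj]
    exact ContinuousLinearMap.adjoint_inner_left A v u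
  have hns : ∀ z : H, (inner ℂ z z : ℂ).re = ‖z‖ ^ 2 := fun z => by
    rw [← inner_self_eq_norm_sq (𝕜 := ℂ)]; rfl
  -- (ker Q)ᗮ = range Q
  have hrangeQle : LinearMap.range (Q : H →ₗ[ℂ] H) ≤ (LinearMap.ker (Q : H →ₗ[ℂ] H))ᗮ := by
    rintro _ ⟨z, rfl⟩
    rw [Submodule.mem_orthogonal]
    intro k hk
    simp only [LinearMap.mem_ker, ContinuousLinearMap.coe_coe] at hk ⊢
    rw [← hQsym, hk, inner_zero_left]
  have hrk : (LinearMap.ker (Q : H →ₗ[ℂ] H))ᗮ = LinearMap.range (Q : H →ₗ[ℂ] H) := by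
    apply le_antisymm
    · intro x hx
      have h1 : x - Q x ∈ LinearMap.ker (Q : H →ₗ[ℂ] H) := by
        simp only [LinearMap.mem_ker, ContinuousLinearMap.coe_coe, map_sub, hQQ, sub_self]
      have h2 : x - Q x ∈ (LinearMap.ker (Q : H →ₗ[ℂ] H))ᗮ :=
        Submodule.sub_mem _ hx (hrangeQle ⟨x, rfl⟩)
      have h3 : x - Q x = 0 := by
        have h4 : x - Q x ∈ LinearMap.ker (Q : H →ₗ[ℂ] H) ⊓ (LinearMap.ker (Q : H →ₗ[ℂ] H))ᗮ := ⟨h1, h2⟩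
        rwa [Submodule.inf_orthogonal_eq_bot, Submodule.mem_bot] at h4
      exact ⟨x, by rw [ContinuousLinearMap.coe_coe, ← sub_eq_zero.mp h3]⟩
    · exact hrangeQle
  -- P kills only (range A)ᗮ; on range A it is injective
  have hPA0 : ∀ x : H, P (A x) = 0 ↔ A x = 0 := by
    intro x
    constructor
    · intro h
      have hm : A x ∈ LinearMap.ker (P : H →ₗ[ℂ] H) := h
      rw [hkerP, Submodule.mem_orthogonal] at hm
      have := hm (A x) ⟨x, rfl⟩
      rwa [inner_self_eq_zero] at this
    · intro h; rw [h, map_zero]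
  -- ker S = ker Q
  have hkerS : LinearMap.ker (S : H →ₗ[ℂ] H) = LinearMap.ker (Q : H →ₗ[ℂ] H) := by
    ext x
    simp only [LinearMap.mem_ker, ContinuousLinearMap.coe_coe, hS, ContinuousLinearMap.comp_apply]
    constructor
    · intro h
      rw [hPA0] at h
      by_contra hne
      have hmem : Q x ∈ LinearMap.range (Q : H →ₗ[ℂ] H) := ⟨x, rfl⟩
      have := hge (Q x) hmem
      rw [h] at this
      simp only [inner_zero_left, Complex.zero_re] at this
      have hpos : 0 < ‖Q x‖ := norm_pos_iff.mpr hne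
      nlinarith [mul_pos hε (pow_pos hpos 2)]
    · intro h; rw [h, map_zero, map_zero]
  -- A is bounded below on range Q
  have hAbound : ∀ x ∈ LinearMap.range (Q : H →ₗ[ℂ] H), ε * ‖x‖ ≤ ‖A x‖ := by
    intro x hx
    rcases eq_or_ne x 0 with rfl | hne
    · simp
    have h1 : ε * ‖x‖ ^ 2 ≤ (inner ℂ (A x) x : ℂ).re := hge x hx
    have h2 : (inner ℂ (A x) x : ℂ).re ≤ ‖A x‖ * ‖x‖ := by
      calc (inner ℂ (A x) x : ℂ).re ≤ |(inner ℂ (A x) x : ℂ).re| := le_abs_self _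
        _ ≤ ‖(inner ℂ (A x) x : ℂ)‖ := Complex.abs_re_le_norm _
        _ ≤ ‖A x‖ * ‖x‖ := norm_inner_le_norm _ _
    have hxn : 0 < ‖x‖ := norm_pos_iff.mpr hne
    nlinarith
  -- range A ⊆ (ker P)ᗮ
  have hrAsub : LinearMap.range (A : H →ₗ[ℂ] H) ≤ (LinearMap.ker (P : H →ₗ[ℂ] H))ᗮ := by
    rw [hkerP]; exact Submodule.le_orthogonal_orthogonal _
  -- part (i)
  have part1 : ∀ x ∈ (LinearMap.ker (S : H →ₗ[ℂ] H))ᗮ, ε * ‖x‖ ≤ ‖S x‖ := by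
    intro x hx
    rw [hkerS, hrk] at hx
    have hQx : Q x = x := hQfix x hx
    have hSx : S x = P (A x) := by
      simp only [hS, ContinuousLinearMap.comp_apply, hQx]
    have hnorm : ‖P (A x)‖ = ‖A x‖ := hP (A x) (hrAsub ⟨x, rfl⟩)
    rw [hSx, hnorm]
    exact hAbound x hx
  -- P is a contraction
  have hPcontr : ∀ y : H, ‖P y‖ ≤ ‖y‖ := by
    intro y
    haveI : CompleteSpace (LinearMap.ker (P : H →ₗ[ℂ] H)) :=
      (ContinuousLinearMap.isClosed_ker P).completeSpace_coe
    obtain ⟨k, hk, z, hz, rfl⟩ :=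
      Submodule.exists_add_mem_mem_orthogonal (K := LinearMap.ker (P : H →ₗ[ℂ] H)) y
    have hPk : P k = 0 := hk
    have hPy : P (k + z) = P z := by rw [map_add, hPk, zero_add]
    have horth : (inner ℂ k z : ℂ) = 0 := hz k hk
    have hpyth : ‖k + z‖ ^ 2 = ‖k‖ ^ 2 + ‖z‖ ^ 2 := by
      rw [@norm_add_sq ℂ, horth]
      simp
    have hz2 : ‖z‖ ^ 2 ≤ ‖k + z‖ ^ 2 := by nlinarith [sq_nonneg ‖k‖]
    have hzle : ‖z‖ ≤ ‖k + z‖ := by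
      nlinarith [norm_nonneg z, norm_nonneg (k + z)]
    rw [hPy, hP z hz]
    exact hzle
  -- A maps ker Q into ker Q, and ‖A y‖ ≤ ε ‖y‖ there
  have hAker : ∀ y ∈ LinearMap.ker (Q : H →ₗ[ℂ] H), A y ∈ LinearMap.ker (Q : H →ₗ[ℂ] H) := by
    intro y hy
    have : Q (A y) = A (Q y) := by
      rw [← ContinuousLinearMap.comp_apply, ← ContinuousLinearMap.comp_apply, hAQ]
    simp only [LinearMap.mem_ker, ContinuousLinearMap.coe_coe] at hy ⊢
    rw [this, hy, map_zero]
  have hltle : ∀ y ∈ LinearMap.ker (Q : H →ₗ[ℂ] H), (inner ℂ (A y) y : ℂ).re ≤ ε * ‖y‖ ^ 2 := by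
    intro y hy
    rcases eq_or_ne y 0 with rfl | hne
    · simp
    · exact le_of_lt (hlt y hy hne)
  have hAkerBound : ∀ y ∈ LinearMap.ker (Q : H →ₗ[ℂ] H), ‖A y‖ ≤ ε * ‖y‖ := by
    intro y hy
    rcases eq_or_ne (A y) 0 with h0 | h0
    · rw [h0, norm_zero]; positivity
    have hAy : A y ∈ LinearMap.ker (Q : H →ₗ[ℂ] H) := hAker y hy
    have hcs := pos_cs hApos y (A y)
    have h1 : (inner ℂ (A y) (A y) : ℂ).re = ‖A y‖ ^ 2 := by
      rw [← inner_self_eq_norm_sq (𝕜 := ℂ)]; rfl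
    have h2 : (inner ℂ (A y) y : ℂ).re ≤ ε * ‖y‖ ^ 2 := hltle y hy
    have h3 : (inner ℂ (A (A y)) (A y) : ℂ).re ≤ ε * ‖A y‖ ^ 2 := hltle _ hAy
    have h4 : 0 ≤ (inner ℂ (A y) y : ℂ).re := hApos.re_inner_nonneg_left y
    have h5 : 0 ≤ (inner ℂ (A (A y)) (A y) : ℂ).re := hApos.re_inner_nonneg_left (A y)
    have hAyp : 0 < ‖A y‖ := norm_pos_iff.mpr h0
    have h6 : (‖A y‖ ^ 2) ^ 2 ≤ (ε * ‖y‖ ^ 2) * (ε * ‖A y‖ ^ 2) := by nlinarith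
    have h7 : ‖A y‖ ^ 2 ≤ (ε * ‖y‖) ^ 2 := by nlinarith [pow_pos hAyp 2]
    nlinarith [mul_nonneg hε.le (norm_nonneg y), norm_nonneg (A y)]
  -- part (ii): closed range
  have hkerSclosed : IsClosed ((LinearMap.ker (S : H →ₗ[ℂ] H) : Submodule ℂ H) : Set H) :=
    ContinuousLinearMap.isClosed_ker S
  haveI : CompleteSpace (LinearMap.ker (S : H →ₗ[ℂ] H)) := hkerSclosed.completeSpace_coe
  have hrangeSeq : Set.range ⇑S = ⇑S '' ((LinearMap.ker (S : H →ₗ[ℂ] H))ᗮ : Set H) := by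
    apply Set.Subset.antisymm
    · rintro _ ⟨y, rfl⟩
      obtain ⟨k, hk, z, hz, rfl⟩ :=
        Submodule.exists_add_mem_mem_orthogonal (K := LinearMap.ker (S : H →ₗ[ℂ] H)) y
      have hSk : S k = 0 := hk
      exact ⟨z, hz, by rw [map_add, hSk, zero_add]⟩
    · rintro _ ⟨y, _, rfl⟩
      exact ⟨y, rfl⟩
  have part2 : IsClosed (Set.range ⇑S) := by
    rw [hrangeSeq]
    exact closed_image_of_bound S _ (Submodule.isClosed_orthogonal _) hε part1
  -- the orthogonal splitting of the quadratic form
  have hAQx : ∀ z : H, A (Q z) = Q (A z) := fun z => by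
    have := ContinuousLinearMap.ext_iff.mp hAQ z
    simpa using this
  have hsplit : ∀ x : H, (inner ℂ (A (Q x)) (Q x) : ℂ).re + (inner ℂ (A (x - Q x)) (x - Q x) : ℂ).re
      = (inner ℂ (A x) x : ℂ).re := by
    intro x
    have hQr : Q (x - Q x) = 0 := by simp [map_sub, hQQ]
    have hc1 : (inner ℂ (A (Q x)) (x - Q x) : ℂ) = 0 := by
      rw [hAQx, hQsym, hQr, inner_zero_right]
    have hc2 : (inner ℂ (A (x - Q x)) (Q x) : ℂ) = 0 := by
      rw [hAsym, hAQx, ← hQsym, hQr, inner_zero_left]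
    have hx : x = Q x + (x - Q x) := by abel
    have hexp : (inner ℂ (A x) x : ℂ)
        = inner ℂ (A (Q x)) (Q x) + inner ℂ (A (x - Q x)) (x - Q x) := by
      conv_lhs => rw [hx]
      rw [map_add, inner_add_left, inner_add_right, inner_add_right, hc1, hc2,
        add_zero, zero_add]
    rw [hexp, Complex.add_re]
  -- ker T = ker A ≤ ker Q
  have hQzero : ∀ x : H, A x = 0 → Q x = 0 := by
    intro x hAx
    have h1 := hsplit x
    rw [hAx, inner_zero_left] at h1
    have h2 : ε * ‖Q x‖ ^ 2 ≤ (inner ℂ (A (Q x)) (Q x) : ℂ).re := hge (Q x) ⟨x, rfl⟩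
    have h3 : 0 ≤ (inner ℂ (A (x - Q x)) (x - Q x) : ℂ).re := hApos.re_inner_nonneg_left _
    by_contra hne
    have hpos : 0 < ‖Q x‖ := norm_pos_iff.mpr hne
    have : (0:ℂ).re = 0 := rfl
    nlinarith [mul_pos hε (pow_pos hpos 2)]
  have hkerT : LinearMap.ker (T : H →ₗ[ℂ] H) ≤ LinearMap.ker (Q : H →ₗ[ℂ] H) := by
    intro x hx
    simp only [LinearMap.mem_ker, ContinuousLinearMap.coe_coe, hTPA, ContinuousLinearMap.comp_apply] at hx
    exact hQzero x ((hPA0 x).mp hx)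
  -- part (iii) a
  have part3a : ¬ FiniteDimensional ℂ (LinearMap.ker (S : H →ₗ[ℂ] H)) := by
    intro hfin
    apply hT
    rw [hkerS] at hfin
    -- range Q is closed
    have hrangeQclosed : IsClosed ((LinearMap.range (Q : H →ₗ[ℂ] H) : Submodule ℂ H) : Set H) := by
      rw [← hrk]; exact Submodule.isClosed_orthogonal _
    -- A(range Q) is closed
    have hC1 : IsClosed (⇑A '' ((LinearMap.range (Q : H →ₗ[ℂ] H) : Submodule ℂ H) : Set H)) :=
      closed_image_of_bound A _ hrangeQclosed hε hAbound
    set V1 : Submodule ℂ H := (LinearMap.range (Q : H →ₗ[ℂ] H)).map (A : H →ₗ[ℂ] H) with hV1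
    set F1 : Submodule ℂ H := (LinearMap.ker (Q : H →ₗ[ℂ] H)).map (A : H →ₗ[ℂ] H) with hF1
    have hV1closed : IsClosed (V1 : Set H) := by
      have : (V1 : Set H) = ⇑A '' ((LinearMap.range (Q : H →ₗ[ℂ] H) : Submodule ℂ H) : Set H) := by
        rw [hV1, Submodule.map_coe]; rfl
      rw [this]; exact hC1
    haveI hF1fin : FiniteDimensional ℂ F1 := Module.Finite.map _ _
    have hrangeA : LinearMap.range (A : H →ₗ[ℂ] H) = V1 ⊔ F1 := by
      apply le_antisymm
      · rintro _ ⟨x, rfl⟩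
        rw [Submodule.mem_sup]
        refine ⟨A (Q x), ⟨Q x, ⟨x, rfl⟩, rfl⟩, A (x - Q x),
          ⟨x - Q x, by simp [LinearMap.mem_ker, map_sub, hQQ], rfl⟩, ?_⟩
        rw [← map_add]
        simp
      · apply sup_le
        · rintro _ ⟨y, _, rfl⟩; exact ⟨y, rfl⟩
        · rintro _ ⟨y, _, rfl⟩; exact ⟨y, rfl⟩
    have hrangeAclosed : IsClosed ((LinearMap.range (A : H →ₗ[ℂ] H) : Submodule ℂ H) : Set H) := by
      rw [hrangeA]
      exact closed_sup_fd V1 F1 hV1closed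
    -- range T is closed
    have hPbound : ∀ x ∈ LinearMap.range (A : H →ₗ[ℂ] H), 1 * ‖x‖ ≤ ‖P x‖ := by
      intro x hx
      rw [one_mul, hP x (hrAsub hx)]
    have hrangeTclosed : IsClosed (Set.range ⇑T) := by
      have h1 : Set.range ⇑T = ⇑P '' ((LinearMap.range (A : H →ₗ[ℂ] H) : Submodule ℂ H) : Set H) := by
        rw [hTPA]
        ext z
        simp [Set.range_comp, ContinuousLinearMap.coe_comp', Set.mem_image,
          LinearMap.mem_range]
      rw [h1]
      exact closed_image_of_bound P _ hrangeAclosed one_pos hPbound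
    exact ⟨hrangeTclosed, Or.inl (Submodule.finiteDimensional_of_le hkerT)⟩
  -- part (iii) b
  have part3b : ¬ FiniteDimensional ℂ ((LinearMap.range (S : H →ₗ[ℂ] H))ᗮ) := by
    intro hfin
    apply hT
    set V : Submodule ℂ H := LinearMap.range (S : H →ₗ[ℂ] H) with hV
    have hVclosed : IsClosed (V : Set H) := by
      have : (V : Set H) = Set.range ⇑S := by
        rw [hV]; ext z; simp [LinearMap.mem_range]
      rw [this]; exact part2
    haveI : CompleteSpace V := hVclosed.completeSpace_coe
    have hST : S = T ∘L Q := by rw [hTPA, ContinuousLinearMap.comp_assoc]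
    have hVW : V ≤ LinearMap.range (T : H →ₗ[ℂ] H) := by
      rintro _ ⟨x, rfl⟩
      exact ⟨Q x, by rw [hST]; rfl⟩
    have htop : V ⊔ Vᗮ = ⊤ := Submodule.sup_orthogonal_of_hasOrthogonalProjection
    have hWeq : LinearMap.range (T : H →ₗ[ℂ] H) = V ⊔ (Vᗮ ⊓ LinearMap.range (T : H →ₗ[ℂ] H)) := by
      have h := sup_inf_assoc_of_le (x := V) (y := Vᗮ) (z := LinearMap.range (T : H →ₗ[ℂ] H)) hVW
      rw [htop, top_inf_eq] at h
      exact h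
    haveI : FiniteDimensional ℂ (Vᗮ ⊓ LinearMap.range (T : H →ₗ[ℂ] H) : Submodule ℂ H) :=
      Submodule.finiteDimensional_of_le inf_le_left
    have hrangeTclosed : IsClosed (Set.range ⇑T) := by
      have h1 : Set.range ⇑T = ((LinearMap.range (T : H →ₗ[ℂ] H) : Submodule ℂ H) : Set H) := by
        ext z; simp [LinearMap.mem_range]
      rw [h1, hWeq]
      exact closed_sup_fd _ _ hVclosed
    -- ker (adjoint T) = (range T)ᗮ
    have hkeradj : LinearMap.ker ((ContinuousLinearMap.adjoint T : H →L[ℂ] H) : H →ₗ[ℂ] H) = (LinearMap.range (T : H →ₗ[ℂ] H))ᗮ := by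
      ext x
      constructor
      · intro hx
        rw [Submodule.mem_orthogonal]
        rintro _ ⟨z, rfl⟩
        rw [ContinuousLinearMap.coe_coe, ← ContinuousLinearMap.adjoint_inner_right T z x]
        simp only [LinearMap.mem_ker, ContinuousLinearMap.coe_coe] at hx
        rw [hx, inner_zero_right]
      · intro hx
        simp only [LinearMap.mem_ker, ContinuousLinearMap.coe_coe]
        rw [← inner_self_eq_zero (𝕜 := ℂ)]
        rw [ContinuousLinearMap.adjoint_inner_left]
        rw [Submodule.mem_orthogonal] at hx
        have := hx (T (ContinuousLinearMap.adjoint T x)) ⟨_, rfl⟩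
        rw [← inner_conj_symm, this, map_zero]
    refine ⟨hrangeTclosed, Or.inr ?_⟩
    rw [hkeradj]
    exact Submodule.finiteDimensional_of_le (Submodule.orthogonal_le hVW)
  -- part (iv)
  have part4 : ‖T - S‖ ≤ ε := by
    apply ContinuousLinearMap.opNorm_le_bound (T - S) hε.le
    intro x
    have hQr : Q (x - Q x) = 0 := by simp [map_sub, hQQ]
    have h1 : (T - S) x = P (A (x - Q x)) := by
      simp only [ContinuousLinearMap.sub_apply, hTPA, hS, ContinuousLinearMap.comp_apply]
      rw [map_sub, ← map_sub]
    have h2 : ‖P (A (x - Q x))‖ ≤ ‖A (x - Q x)‖ := hPcontr _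
    have h3 : ‖A (x - Q x)‖ ≤ ε * ‖x - Q x‖ := hAkerBound _ hQr
    have h4 : ‖x - Q x‖ ≤ ‖x‖ := by
      have horth : (inner ℂ (Q x) (x - Q x) : ℂ) = 0 := by
        rw [hQsym, hQr, inner_zero_right]
      have horth' : (inner ℂ (x - Q x) (Q x) : ℂ) = 0 := by
        rw [← inner_conj_symm, horth, map_zero]
      have hxeq : x = Q x + (x - Q x) := by abel
      have hin : (inner ℂ x x : ℂ) = inner ℂ (Q x) (Q x) + inner ℂ (x - Q x) (x - Q x) := by
        conv_lhs => rw [hxeq]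
        rw [inner_add_add_self, horth, horth']
        ring
      have hpyth : ‖x‖ ^ 2 = ‖Q x‖ ^ 2 + ‖x - Q x‖ ^ 2 := by
        have h5 := congrArg Complex.re hin
        rw [Complex.add_re, hns, hns, hns] at h5
        exact h5
      have h6 : ‖x - Q x‖ ^ 2 ≤ ‖x‖ ^ 2 := by nlinarith [sq_nonneg ‖Q x‖]
      exact (pow_le_pow_iff_left₀ (norm_nonneg _) (norm_nonneg _) two_ne_zero).mp h6
    calc ‖(T - S) x‖ = ‖P (A (x - Q x))‖ := by rw [h1]
      _ ≤ ‖A (x - Q x)‖ := h2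
      _ ≤ ε * ‖x - Q x‖ := h3
      _ ≤ ε * ‖x‖ := mul_le_mul_of_nonneg_left h4 hε.le
  exact ⟨part1, part2, part3a, part3b, part4⟩


end
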